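/- Let ℓ be a natural number and let q̄(w) = Σ_{k=0}^{ℓ} binom(−1/2, k)·(−2)^k·w^{ℓ−k}, i.e. the polynomial part of the Laurent expansion of w^ℓ·(1 − 2/w)^{−1/2} at w = ∞. Then (2ℓ+1)·(w−2)·q̄(w) − w·q̄(w) − 2·w·(w−2)·q̄′(w) is the constant polynomial with value binom(−1/2, ℓ)·(−2)^{ℓ+1}·(2ℓ+1). -/

import Mathlib

open Polynomial Finset

/-- The generalized binomial coefficient `binom(−1/2, k)`. -/
noncomputable def gbinom (k : ℕ) : ℂ :=
  (∏ j ∈ Finset.range k, ((-1/2 : ℂ) - j)) / (Nat.factorial k)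

/-- `q̄(w) = Σ_{k=0}^{ℓ} binom(−1/2,k)(−2)^k w^{ℓ−k}`. -/
noncomputable def qbar (ℓ : ℕ) : Polynomial ℂ :=
  ∑ k ∈ Finset.range (ℓ + 1), C (gbinom k * (-2 : ℂ) ^ k) * X ^ (ℓ - k)

lemma gb_rec (k : ℕ) :
    gbinom (k+1) * (-2:ℂ)^(k+1) * ((k:ℂ)+1) = gbinom k * (-2:ℂ)^k * (2*(k:ℂ)+1) := by
  have hk : ((k:ℂ)+1) ≠ 0 := Nat.cast_add_one_ne_zero k
  have hf : ((Nat.factorial k : ℂ)) ≠ 0 := by exact_mod_cast Nat.factorial_ne_zero k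
  simp only [gbinom, Finset.prod_range_succ, Nat.factorial_succ, Nat.cast_mul,
    Nat.cast_add, Nat.cast_one]
  field_simp
  ring

lemma qbar_succ (ℓ : ℕ) :
    qbar (ℓ+1) = X * qbar ℓ + C (gbinom (ℓ+1) * (-2:ℂ)^(ℓ+1)) := by
  unfold qbar
  rw [Finset.sum_range_succ, Finset.mul_sum]
  simp only [Nat.sub_self, pow_zero, mul_one]
  congr 1
  apply Finset.sum_congr rfl
  intro k hk
  have hk' : k ≤ ℓ := Nat.lt_succ_iff.mp (Finset.mem_range.mp hk)
  rw [Nat.succ_sub hk', pow_succ]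
  ring

theorem stmt1 (ℓ : ℕ) :
    C (2 * (ℓ : ℂ) + 1) * ((X - C 2) * qbar ℓ) - X * qbar ℓ
        - C 2 * X * (X - C 2) * derivative (qbar ℓ)
      = C (gbinom ℓ * (-2 : ℂ) ^ (ℓ + 1) * (2 * (ℓ : ℂ) + 1)) := by
  induction ℓ with
  | zero =>
      simp [qbar, gbinom]
  | succ ℓ ih =>
      have habC : C (gbinom (ℓ+1)) * (-2:Polynomial ℂ)^(ℓ+1) * ((ℓ:Polynomial ℂ)+1)
          = C (gbinom ℓ) * (-2:Polynomial ℂ)^ℓ * (2*(ℓ:Polynomial ℂ)+1) := by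
        have := congrArg C (gb_rec ℓ)
        simpa [map_mul, map_add, map_pow, map_neg, map_ofNat] using this
      rw [qbar_succ]
      rw [derivative_add, derivative_mul, derivative_X, derivative_C, one_mul, add_zero]
      simp only [map_mul, map_add, map_pow, map_neg, map_ofNat, map_one, Nat.cast_add,
        Nat.cast_one, C_eq_natCast] at ih ⊢
      linear_combination X * ih + 2 * X * habC
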